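/- The proportion of permutations of {1, …, n} having at most 1.1·ln(n) cycles tends to 1 as n → ∞. -/

import Mathlib

open Equiv Equiv.Perm Finset

variable {α : Type*} [DecidableEq α] [Fintype α]

/-- number of cycles of a permutation, counting fixed points as cycles -/
def permXi (f : Perm α) : ℕ :=
  Multiset.card f.cycleType + Fintype.card {x // f x = x}

lemma card_fixed_eq (f : Perm α) :
    Fintype.card {x // f x = x} = Fintype.card α - f.support.card := by
  classical
  rw [Fintype.card_subtype]
  have h := Finset.card_filter_add_card_filter_not
    (s := (univ : Finset α)) (p := fun x => f x = x)
  have hsupp : f.support = univ.filter (fun x => ¬ f x = x) := rfl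
  rw [hsupp]
  rw [Finset.card_univ] at h
  omega

lemma permXi_eq (f : Perm α) :
    permXi f = Multiset.card f.cycleType + (Fintype.card α - f.support.card) := by
  rw [permXi, card_fixed_eq]

lemma merge_cycle {c : Perm α} (hc : c.IsCycle) {a b : α}
    (ha : a ∈ c.support) (hb : b ∉ c.support) :
    IsCycle (swap b a * c) ∧ (swap b a * c).support = insert b c.support := by
  classical
  set l := c.toList a with hldef
  have hl : l.formPerm = c := by
    rw [hldef, formPerm_toList, hc.cycleOf_eq (mem_support.1 ha)]
  have hnd : l.Nodup := Equiv.Perm.nodup_toList c a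
  have hlen : 2 ≤ l.length := two_le_length_toList_iff_mem_support.2 ha
  have hbl : b ∉ l := by
    intro hmem
    apply hb
    have : c.support = l.toFinset := by
      rw [← hl]
      exact List.support_formPerm_of_nodup l hnd (by
        intro x hx
        rw [hx] at hlen; simp at hlen)
    rw [this]
    exact List.mem_toFinset.2 hmem
  obtain ⟨l', hl'⟩ : ∃ l', l = a :: l' := by
    cases hl0 : l with
    | nil => rw [hl0] at hlen; simp at hlen
    | cons x t =>
      refine ⟨t, ?_⟩
      have h0 := Equiv.Perm.toList_getElem_zero (p := c) (x := a) ha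
      have h2 : x = a := by
        rw [← h0, List.getElem_of_eq hl0]
        simp
      rw [h2]
  have hnd' : (b :: l).Nodup := List.nodup_cons.2 ⟨hbl, hnd⟩
  have hform : (b :: l).formPerm = swap b a * c := by
    rw [hl', List.formPerm_cons_cons, ← hl', hl]
  constructor
  · rw [← hform]
    exact List.isCycle_formPerm hnd' (by simp; omega)
  · rw [← hform]
    rw [List.support_formPerm_of_nodup (b :: l) hnd' (by
      intro x hx
      have h2 : l.length + 1 = 1 := by simpa using congrArg List.length hx
      omega)]
    have hct : c.support = l.toFinset := by
      rw [← hl]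
      exact List.support_formPerm_of_nodup l hnd (by
        intro x hx; rw [hx] at hlen; simp at hlen)
    rw [hct]
    simp

lemma permXi_swap_mul {f : Perm α} {a b : α} (hb : f b = b) (hab : a ≠ b) :
    permXi (swap b a * f) + 1 = permXi f := by
  classical
  have hbs : b ∉ f.support := by simp [mem_support, hb]
  by_cases ha : f a = a
  · -- `a` is also a fixed point: the swap is disjoint from `f`
    have has : a ∉ f.support := by simp [mem_support, ha]
    have hd : Disjoint (swap b a) f := by
      intro x
      by_cases hx : x = a
      · right; rw [hx, ha]
      · by_cases hx' : x = b
        · right; rw [hx', hb]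
        · left; exact swap_apply_of_ne_of_ne hx' hx
    have hswap : (swap b a).IsCycle := isCycle_swap (Ne.symm hab)
    have hsupswap : (swap b a).support = {b, a} := support_swap (Ne.symm hab)
    have hct : (swap b a * f).cycleType = (swap b a).cycleType + f.cycleType :=
      hd.cycleType_mul
    have hsup : (swap b a * f).support = {b, a} ∪ f.support := by
      rw [hd.support_mul, hsupswap]
    have hcardsup : (swap b a * f).support.card = f.support.card + 2 := by
      rw [hsup, Finset.card_union_of_disjoint (by
          simp only [Finset.disjoint_left, Finset.mem_insert, Finset.mem_singleton]
          rintro x (rfl | rfl) <;> simp [has, hbs]),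
        Finset.card_insert_of_notMem (by simp [Ne.symm hab]), Finset.card_singleton]
      omega
    have hle : f.support.card + 2 ≤ Fintype.card α := by
      rw [← hcardsup]
      exact Finset.card_le_univ _ |>.trans_eq (Finset.card_univ)
    have hctswap : (swap b a).cycleType = {2} := by
      rw [hswap.cycleType, card_support_swap (Ne.symm hab)]
    rw [permXi_eq, permXi_eq, hct, hctswap, hcardsup]
    simp only [Multiset.card_add, Multiset.card_singleton]
    omega
  · -- `a` is in a nontrivial cycle of `f`
    set c := f.cycleOf a with hcdef
    have hc : c.IsCycle := isCycle_cycleOf f ha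
    have hmem : c ∈ f.cycleFactorsFinset := cycleOf_mem_cycleFactorsFinset_iff.2 (mem_support.2 ha)
    set g := f * c⁻¹ with hgdef
    have hdis : Disjoint g c := disjoint_mul_inv_of_mem_cycleFactorsFinset hmem
    have hgc : g * c = f := by rw [hgdef]; group
    have ha_supp : a ∈ c.support := by
      rw [hcdef, mem_support_cycleOf_iff]
      exact ⟨SameCycle.refl _ _, mem_support.2 ha⟩
    have hb_supp : b ∉ c.support := fun h => hbs (support_cycleOf_le f a h)
    obtain ⟨hcyc', hsupp'⟩ := merge_cycle hc ha_supp hb_supp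
    have hcb : c b = b := by
      by_contra h
      exact hb_supp (mem_support.2 h)
    have hcib : c⁻¹ b = b := by
      rw [Perm.inv_eq_iff_eq]; exact hcb.symm
    have hbg : g b = b := by
      rw [hgdef]
      simp only [Perm.mul_apply]
      rw [hcib, hb]
    have hbgs : b ∉ g.support := by simp [mem_support, hbg]
    have hdiss : _root_.Disjoint g.support c.support := hdis.disjoint_support
    have hdis2 : Disjoint g (swap b a * c) := by
      rw [disjoint_iff_disjoint_support, hsupp']
      rw [Finset.disjoint_insert_right]
      exact ⟨hbgs, hdiss⟩
    have hdsw : Disjoint (swap b a) g := by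
      intro x
      by_cases hx : x = a
      · right
        subst hx
        by_contra h
        exact Finset.disjoint_left.1 hdiss (mem_support.2 h) ha_supp
      · by_cases hx' : x = b
        · right; rw [hx', hbg]
        · left; exact swap_apply_of_ne_of_ne hx' hx
    have hcomm : swap b a * f = g * (swap b a * c) := by
      rw [← hgc, ← mul_assoc, hdsw.commute.eq, mul_assoc]
    have hct : (swap b a * f).cycleType = g.cycleType + (swap b a * c).cycleType := by
      rw [hcomm]; exact hdis2.cycleType_mul
    have hctf : f.cycleType = g.cycleType + c.cycleType := by
      rw [← hgc]; exact hdis.cycleType_mul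
    have hsupmerged : (swap b a * c).support.card = c.support.card + 1 := by
      rw [hsupp', Finset.card_insert_of_notMem hb_supp]
    have hsupf : f.support = g.support ∪ c.support := by
      rw [← hgc, hdis.support_mul]
    have hsupcard : (swap b a * f).support.card = f.support.card + 1 := by
      rw [hcomm, hdis2.support_mul, hsupp', Finset.union_insert, ← hsupf,
        Finset.card_insert_of_notMem hbs]
    have hlt : f.support.card < Fintype.card α := by
      have : insert b f.support ⊆ univ := Finset.subset_univ _
      calc f.support.card < (insert b f.support).card := by
            rw [Finset.card_insert_of_notMem hbs]; omega
        _ ≤ Fintype.card α := (Finset.card_le_univ _)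
    rw [permXi_eq, permXi_eq, hct, hctf, hsupcard, hcyc'.cycleType, hc.cycleType]
    simp only [Multiset.card_add, Multiset.coe_card, List.length_singleton, Multiset.card_singleton]
    omega

lemma cycleType_permCongr {β : Type*} [DecidableEq β] [Fintype β]
    (g : α ≃ β) (f : Perm α) : ((g.permCongr f).cycleType = f.cycleType) := by
  classical
  have key : g.permCongr f
      = f.extendDomain (g.trans (Equiv.subtypeUnivEquiv (fun _ : β => trivial)).symm) := by
    ext b
    rw [Equiv.Perm.extendDomain_apply_subtype _ _ trivial]
    simp [Equiv.subtypeUnivEquiv]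
  rw [key, Equiv.Perm.cycleType_extendDomain]

lemma permXi_permCongr {β : Type*} [DecidableEq β] [Fintype β]
    (g : α ≃ β) (f : Perm α) : permXi (g.permCongr f) = permXi f := by
  rw [permXi, permXi, cycleType_permCongr]
  congr 1
  refine Fintype.card_congr (Equiv.symm (g.subtypeEquiv fun a => ?_))
  simp [g.injective.eq_iff]

lemma cycleType_optionCongr (e : Perm α) :
    Equiv.Perm.cycleType (e.optionCongr : Perm (Option α)) = e.cycleType := by
  classical
  have key : (e.optionCongr : Perm (Option α))
      = e.extendDomain (Equiv.optionIsSomeEquiv α).symm := by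
    refine Equiv.ext fun x => ?_
    cases x with
    | none => exact (Equiv.Perm.extendDomain_apply_not_subtype _ _ (by simp)).symm
    | some a =>
      simp only [Equiv.Perm.extendDomain_apply_subtype, Option.isSome_some]
      simp [Equiv.optionIsSomeEquiv]
  rw [key, Equiv.Perm.cycleType_extendDomain]

lemma permXi_optionCongr (e : Perm α) :
    permXi (e.optionCongr : Perm (Option α)) = permXi e + 1 := by
  have hct := cycleType_optionCongr e
  have hsup : (Equiv.Perm.support (e.optionCongr : Perm (Option α))).card
      = e.support.card := by
    rw [← Equiv.Perm.sum_cycleType, ← Equiv.Perm.sum_cycleType, hct]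
  rw [permXi_eq, permXi_eq, hct, hsup, Fintype.card_option]
  have h3 : #e.support ≤ Fintype.card α := by
    simpa using Finset.card_le_univ e.support
  omega

lemma permXi_decomposeOption (q : Option α) (e : Perm α) :
    permXi (Equiv.Perm.decomposeOption.symm (q, e))
      = if q = none then permXi e + 1 else permXi e := by
  cases q with
  | none =>
    rw [if_pos rfl]
    have h1 : Equiv.Perm.decomposeOption.symm ((none : Option α), e)
        = (e.optionCongr : Perm (Option α)) := by
      rw [Equiv.Perm.decomposeOption_symm_apply, swap_self, ← Equiv.Perm.one_def, one_mul]
    rw [h1, permXi_optionCongr]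
  | some a =>
    rw [if_neg (by exact Option.some_ne_none a)]
    have hd : Equiv.Perm.decomposeOption.symm ((some a : Option α), e)
        = swap none (some a) * (e.optionCongr : Perm (Option α)) := by
      rw [Equiv.Perm.decomposeOption_symm_apply]
    rw [hd]
    have hb : (e.optionCongr : Perm (Option α)) none = none := rfl
    have h2 := permXi_swap_mul (f := (e.optionCongr : Perm (Option α)))
      (a := some a) (b := none) hb (by exact Option.some_ne_none a)
    rw [permXi_optionCongr] at h2
    omega

lemma permXi_decomposeFin {n : ℕ} (p : Fin (n + 1)) (e : Perm (Fin n)) :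
    permXi (Equiv.Perm.decomposeFin.symm (p, e))
      = if p = 0 then permXi e + 1 else permXi e := by
  have hd : Equiv.Perm.decomposeFin.symm (p, e)
      = (Equiv.permCongr (finSuccEquiv n)).symm
          (Equiv.Perm.decomposeOption.symm (finSuccEquiv n p, e)) := by
    rfl
  have hsymm : (Equiv.permCongr (finSuccEquiv n)).symm
      = Equiv.permCongr (finSuccEquiv n).symm := rfl
  rw [hd, hsymm, permXi_permCongr, permXi_decomposeOption]
  have heq : (finSuccEquiv n p = none) ↔ p = 0 := by
    rw [← finSuccEquiv_zero (n := n)]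
    exact (finSuccEquiv n).injective.eq_iff
  by_cases h : p = 0
  · rw [if_pos (heq.2 h), if_pos h]
  · rw [if_neg (fun hc => h (heq.1 hc)), if_neg h]

lemma sum_pow_permXi (x : ℝ) : ∀ n : ℕ,
    ∑ s : Perm (Fin n), x ^ permXi s = ∏ k ∈ Finset.range n, (x + k) := by
  intro n
  induction n with
  | zero =>
    rw [Finset.range_zero, Finset.prod_empty]
    have h1 : ∀ s : Perm (Fin 0), permXi s = 0 := by
      intro s
      have hs : s = 1 := Subsingleton.elim _ _
      rw [hs, permXi_eq]
      simp
    rw [Finset.sum_congr rfl fun s _ => by rw [h1 s, pow_zero]]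
    simp
  | succ n ih =>
    rw [← Equiv.sum_comp (Equiv.Perm.decomposeFin (n := n)).symm
      (fun s => x ^ permXi s), Fintype.sum_prod_type]
    have hterm : ∀ (p : Fin (n+1)) (e : Perm (Fin n)),
        x ^ permXi (Equiv.Perm.decomposeFin.symm (p, e))
          = (if p = 0 then x else 1) * x ^ permXi e := by
      intro p e
      rw [permXi_decomposeFin]
      split_ifs with h
      · rw [pow_succ]; ring
      · rw [one_mul]
    calc ∑ p : Fin (n+1), ∑ e : Perm (Fin n),
          x ^ permXi (Equiv.Perm.decomposeFin.symm (p, e))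
        = ∑ p : Fin (n+1), ∑ e : Perm (Fin n),
          (if p = 0 then x else 1) * x ^ permXi e := by
          exact Finset.sum_congr rfl fun p _ => Finset.sum_congr rfl fun e _ => hterm p e
      _ = (∑ p : Fin (n+1), if p = 0 then x else 1) * ∑ e : Perm (Fin n), x ^ permXi e := by
          rw [Finset.sum_mul]
          exact Finset.sum_congr rfl fun p _ => (Finset.mul_sum _ _ _).symm
      _ = (x + n) * ∏ k ∈ Finset.range n, (x + k) := by
          rw [ih]
          congr 1
          have : ∀ p : Fin (n+1), (if p = 0 then x else 1) = (if p = 0 then x - 1 else 0) + 1 := by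
            intro p; split_ifs <;> ring
          rw [Finset.sum_congr rfl fun p _ => this p, Finset.sum_add_distrib]
          rw [Finset.sum_ite_eq' Finset.univ (0 : Fin (n+1)) (fun _ => x - 1)]
          simp only [Finset.mem_univ, if_pos, Finset.sum_const, Finset.card_univ,
            Fintype.card_fin, nsmul_eq_mul, mul_one]
          push_cast
          ring
      _ = ∏ k ∈ Finset.range (n+1), (x + k) := by
          rw [Finset.prod_range_succ]
          ring

lemma harmonic_le_log (n : ℕ) :
    ∑ k ∈ Finset.range n, (1:ℝ)/(k+1) ≤ 1 + Real.log n := by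
  induction n with
  | zero => simp
  | succ n ih =>
    rw [Finset.sum_range_succ]
    push_cast
    rcases Nat.eq_zero_or_pos n with h0 | hpos
    · subst h0; simp
    · have hn : (0:ℝ) < n := by exact_mod_cast hpos
      have h1 : Real.log ((n:ℝ)/(n+1)) ≤ (n:ℝ)/(n+1) - 1 :=
        Real.log_le_sub_one_of_pos (by positivity)
      rw [Real.log_div (ne_of_gt hn) (by positivity)] at h1
      have h2 : (n:ℝ)/(n+1) - 1 = -(1/(n+1)) := by field_simp; ring
      rw [h2] at h1
      linarith

lemma prod_onepointone_bound (n : ℕ) :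
    ∏ k ∈ Finset.range n, ((1.1:ℝ) + k)
      ≤ (n.factorial : ℝ) * Real.exp (0.1 * (1 + Real.log n)) := by
  have step : ∀ k ∈ Finset.range n, (1.1:ℝ) + k ≤ ((k:ℝ)+1) * Real.exp (0.1/(k+1)) := by
    intro k _
    have h1 : (0:ℝ) < (k:ℝ)+1 := by positivity
    have h2 : 0.1/((k:ℝ)+1) + 1 ≤ Real.exp (0.1/((k:ℝ)+1)) := Real.add_one_le_exp _
    calc (1.1:ℝ) + k = ((k:ℝ)+1) * (0.1/((k:ℝ)+1) + 1) := by field_simp; ring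
      _ ≤ ((k:ℝ)+1) * Real.exp (0.1/((k:ℝ)+1)) :=
          mul_le_mul_of_nonneg_left h2 (le_of_lt h1)
  calc ∏ k ∈ Finset.range n, ((1.1:ℝ)+k)
      ≤ ∏ k ∈ Finset.range n, (((k:ℝ)+1) * Real.exp (0.1/(k+1))) :=
        Finset.prod_le_prod (fun k _ => by positivity) step
    _ = (∏ k ∈ Finset.range n, ((k:ℝ)+1)) * ∏ k ∈ Finset.range n, Real.exp (0.1/(k+1)) :=
        Finset.prod_mul_distrib
    _ ≤ (n.factorial : ℝ) * Real.exp (0.1 * (1 + Real.log n)) := by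
        have hfac : (∏ k ∈ Finset.range n, ((k:ℝ)+1)) = (n.factorial : ℝ) := by
          rw [← Finset.prod_range_add_one_eq_factorial]
          push_cast
          rfl
        rw [hfac, ← Real.exp_sum]
        apply mul_le_mul_of_nonneg_left _ (by positivity)
        rw [Real.exp_le_exp]
        have : ∑ k ∈ Finset.range n, (0.1:ℝ)/(k+1)
            = 0.1 * ∑ k ∈ Finset.range n, (1:ℝ)/(k+1) := by
          rw [Finset.mul_sum]
          exact Finset.sum_congr rfl fun k _ => by ring
        rw [this]
        have := harmonic_le_log n
        nlinarith [harmonic_le_log n]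

lemma log_oneone : (1/11 : ℝ) < Real.log 1.1 := by
  have h := Real.log_lt_sub_one_of_pos (x := (10/11 : ℝ)) (by norm_num) (by norm_num)
  rw [show ((10:ℝ)/11) = (1.1:ℝ)⁻¹ by norm_num, Real.log_inv] at h
  linarith

lemma card_filter_bound (n : ℕ) :
    ((Finset.univ.filter
        (fun s : Perm (Fin n) => ¬ ((permXi s : ℝ) ≤ 1.1 * Real.log n))).card : ℝ)
      * Real.exp (Real.log 1.1 * (1.1 * Real.log n))
      ≤ ∏ k ∈ Finset.range n, ((1.1:ℝ) + k) := by
  rw [← sum_pow_permXi (1.1 : ℝ) n]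
  set B := Finset.univ.filter
    (fun s : Perm (Fin n) => ¬ ((permXi s : ℝ) ≤ 1.1 * Real.log n)) with hB
  have hlog : (0:ℝ) ≤ Real.log 1.1 := by
    have := log_oneone; linarith
  have h1 : ∀ s ∈ B, Real.exp (Real.log 1.1 * (1.1 * Real.log n)) ≤ (1.1:ℝ) ^ permXi s := by
    intro s hs
    rw [hB, Finset.mem_filter, not_le] at hs
    have hpow : (1.1:ℝ) ^ permXi s = Real.exp (Real.log 1.1 * permXi s) := by
      rw [← Real.rpow_natCast 1.1 (permXi s), Real.rpow_def_of_pos (by norm_num)]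
    rw [hpow, Real.exp_le_exp]
    exact mul_le_mul_of_nonneg_left (le_of_lt hs.2) hlog
  calc (B.card : ℝ) * Real.exp (Real.log 1.1 * (1.1 * Real.log n))
      = ∑ _s ∈ B, Real.exp (Real.log 1.1 * (1.1 * Real.log n)) := by
        rw [Finset.sum_const, nsmul_eq_mul]
    _ ≤ ∑ s ∈ B, (1.1:ℝ) ^ permXi s := Finset.sum_le_sum h1
    _ ≤ ∑ s : Perm (Fin n), (1.1:ℝ) ^ permXi s :=
        Finset.sum_le_sum_of_subset_of_nonneg (Finset.subset_univ _)
          (fun s _ _ => by positivity)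

lemma ratio_bound (n : ℕ) :
    ((Finset.univ.filter
        (fun s : Perm (Fin n) => ¬ ((permXi s : ℝ) ≤ 1.1 * Real.log n))).card : ℝ)
      / (n.factorial : ℝ)
      ≤ Real.exp (0.1 + (0.1 - 1.1 * Real.log 1.1) * Real.log n) := by
  have hfac : (0:ℝ) < (n.factorial : ℝ) := by exact_mod_cast n.factorial_pos
  have hE : (0:ℝ) < Real.exp (Real.log 1.1 * (1.1 * Real.log n)) := Real.exp_pos _
  rw [div_le_iff₀ hfac]
  have h1 := card_filter_bound n
  have h2 := prod_onepointone_bound n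
  have key : ((Finset.univ.filter
        (fun s : Perm (Fin n) => ¬ ((permXi s : ℝ) ≤ 1.1 * Real.log n))).card : ℝ)
      * Real.exp (Real.log 1.1 * (1.1 * Real.log n))
      ≤ (n.factorial : ℝ) * Real.exp (0.1 * (1 + Real.log n)) := le_trans h1 h2
  have hsplit : Real.exp (0.1 * (1 + Real.log n))
      = Real.exp (0.1 + (0.1 - 1.1 * Real.log 1.1) * Real.log n)
        * Real.exp (Real.log 1.1 * (1.1 * Real.log n)) := by
    rw [← Real.exp_add]
    congr 1
    ring
  rw [hsplit] at key
  apply le_of_mul_le_mul_right _ hE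
  calc ((Finset.univ.filter
        (fun s : Perm (Fin n) => ¬ ((permXi s : ℝ) ≤ 1.1 * Real.log n))).card : ℝ)
      * Real.exp (Real.log 1.1 * (1.1 * Real.log n))
      ≤ (n.factorial : ℝ) * (Real.exp (0.1 + (0.1 - 1.1 * Real.log 1.1) * Real.log n)
          * Real.exp (Real.log 1.1 * (1.1 * Real.log n))) := key
    _ = Real.exp (0.1 + (0.1 - 1.1 * Real.log 1.1) * Real.log n) * (n.factorial : ℝ)
          * Real.exp (Real.log 1.1 * (1.1 * Real.log n)) := by ring

lemma tendsto_ratio_zero :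
    Filter.Tendsto
      (fun n : ℕ => Real.exp (0.1 + (0.1 - 1.1 * Real.log 1.1) * Real.log n))
      Filter.atTop (nhds 0) := by
  have hc : (0.1 - 1.1 * Real.log 1.1 : ℝ) < 0 := by
    have := log_oneone
    nlinarith
  have h1 : Filter.Tendsto (fun n : ℕ => Real.log n) Filter.atTop Filter.atTop :=
    Real.tendsto_log_atTop.comp tendsto_natCast_atTop_atTop
  have h2 : Filter.Tendsto (fun n : ℕ => (0.1 - 1.1 * Real.log 1.1) * Real.log n)
      Filter.atTop Filter.atBot := h1.const_mul_atTop_of_neg hc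
  have h3 : Filter.Tendsto (fun n : ℕ => 0.1 + (0.1 - 1.1 * Real.log 1.1) * Real.log n)
      Filter.atTop Filter.atBot := by
    exact Filter.tendsto_atBot_add_const_left _ _ h2
  exact Real.tendsto_exp_atBot.comp h3

/-- The proportion of permutations of `{1,…,n}` having at most `1.1 · ln n` cycles tends to 1
as `n → ∞`. -/
theorem stmt_10 :
    Filter.Tendsto (fun n : ℕ =>
      (Nat.card {s : Equiv.Perm (Fin n) //
          ((s.cycleType.card + Fintype.card {x : Fin n // s x = x} : ℕ) : ℝ)
            ≤ 1.1 * Real.log n} : ℝ) / (n.factorial : ℝ))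
      Filter.atTop (nhds 1) := by
  have hcount : ∀ n : ℕ,
      (Nat.card {s : Equiv.Perm (Fin n) //
          ((s.cycleType.card + Fintype.card {x : Fin n // s x = x} : ℕ) : ℝ)
            ≤ 1.1 * Real.log n} : ℝ)
        = (n.factorial : ℝ)
          - ((Finset.univ.filter
              (fun s : Perm (Fin n) => ¬ ((permXi s : ℝ) ≤ 1.1 * Real.log n))).card : ℝ) := by
    intro n
    have e0 : Nat.card {s : Equiv.Perm (Fin n) //
          ((s.cycleType.card + Fintype.card {x : Fin n // s x = x} : ℕ) : ℝ)
            ≤ 1.1 * Real.log n}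
        = (Finset.univ.filter
            (fun s : Perm (Fin n) => ((permXi s : ℝ) ≤ 1.1 * Real.log n))).card := by
      rw [Nat.card_eq_fintype_card]
      exact Fintype.card_subtype _
    have e2 := Finset.card_filter_add_card_filter_not
      (s := (Finset.univ : Finset (Perm (Fin n))))
      (p := fun s => ((permXi s : ℝ) ≤ 1.1 * Real.log n))
    have e3 : (Finset.univ : Finset (Perm (Fin n))).card = n.factorial := by
      rw [Finset.card_univ, Fintype.card_perm, Fintype.card_fin]
    rw [e3] at e2
    have e4 : (Finset.univ.filter
          (fun s : Perm (Fin n) => ((permXi s : ℝ) ≤ 1.1 * Real.log n))).card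
        = n.factorial - (Finset.univ.filter
          (fun s : Perm (Fin n) => ¬((permXi s : ℝ) ≤ 1.1 * Real.log n))).card := by
      omega
    rw [e0, e4, Nat.cast_sub (by omega)]
  have hfun : (fun n : ℕ =>
      (Nat.card {s : Equiv.Perm (Fin n) //
          ((s.cycleType.card + Fintype.card {x : Fin n // s x = x} : ℕ) : ℝ)
            ≤ 1.1 * Real.log n} : ℝ) / (n.factorial : ℝ))
      = fun n : ℕ => 1 - ((Finset.univ.filter
          (fun s : Perm (Fin n) => ¬ ((permXi s : ℝ) ≤ 1.1 * Real.log n))).card : ℝ)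
            / (n.factorial : ℝ) := by
    funext n
    have hfac : (0:ℝ) < (n.factorial : ℝ) := by exact_mod_cast n.factorial_pos
    rw [hcount n, sub_div, div_self (ne_of_gt hfac)]
  rw [hfun]
  have hzero : Filter.Tendsto (fun n : ℕ => ((Finset.univ.filter
      (fun s : Perm (Fin n) => ¬ ((permXi s : ℝ) ≤ 1.1 * Real.log n))).card : ℝ)
        / (n.factorial : ℝ)) Filter.atTop (nhds 0) := by
    apply squeeze_zero (fun n => by positivity) ratio_bound tendsto_ratio_zero
  have hfinal := hzero.const_sub 1
  simpa using hfinal
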